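/- Let (b_N), (d_N), (b'_N), (d'_N) be non-decreasing sequences of positive integers with b_N·d_N = b'_N·d'_N = M_N for all N, where M_N → ∞, and let ϑ, ϑ' ∈ {−1, 1} with ϑ ≠ ϑ'. Then lim_{N→∞} (1/M_N²) · #{ (i,j) ∈ [M_N]² : Γ_{b_N,d_N}^{(ϑ)}(i,j) = Γ_{b'_N,d'_N}^{(ϑ')}(i,j) } = 0 if and only if lim_{N→∞} b_N·d'_N = ∞ and lim_{N→∞} b'_N·d_N = ∞. -/

import Mathlib

open Filter

/-- The partial transpose `Γ_{b,d}^{(ϑ)} : [N]² → [N]²` for `N = b·d`, as an entry permutation.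
Identifying `[N] ≃ [b] × [d]` via `i = a₁·d + a₂` (`0`-based), the right partial transpose
(`θ = true`, i.e. `ϑ = 1`) swaps `a₂` and `a₋₂`, while the left partial transpose (`θ = false`,
i.e. `ϑ = -1`) swaps `a₁` and `a₋₁`. -/
def pt {b d M : ℕ} (θ : Bool) (h : b * d = M) :
    Fin M × Fin M → Fin M × Fin M := fun x =>
  let e : Fin M ≃ Fin b × Fin d := (finCongr h).symm.trans finProdFinEquiv.symm
  let u := e x.1
  let v := e x.2
  if θ then (e.symm (u.1, v.2), e.symm (v.1, u.2))
  else (e.symm (v.1, u.2), e.symm (u.1, v.2))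

/-- for non-decreasing sequences of positive integers with
`b_N·d_N = b'_N·d'_N = M_N → ∞` and opposite `ϑ ≠ ϑ'` in `{−1,1}` (encoded by `θ ≠ θ'`),
`(1/M_N²)·#{(i,j) : Γ_{b_N,d_N}^{(ϑ)}(i,j) = Γ_{b'_N,d'_N}^{(ϑ')}(i,j)} → 0` iff
`b_N·d'_N → ∞` and `b'_N·d_N → ∞`. -/
lemma pt_true_fst {b d M : ℕ} (h : b * d = M) (x : Fin M × Fin M) :
    ((pt true h x).1 : ℕ) = (x.2 : ℕ) % d + d * ((x.1 : ℕ) / d) := by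
  simp [pt, finProdFinEquiv, Fin.divNat, Fin.modNat, finCongr]

lemma pt_true_snd {b d M : ℕ} (h : b * d = M) (x : Fin M × Fin M) :
    ((pt true h x).2 : ℕ) = (x.1 : ℕ) % d + d * ((x.2 : ℕ) / d) := by
  simp [pt, finProdFinEquiv, Fin.divNat, Fin.modNat, finCongr]

lemma pt_false_fst {b d M : ℕ} (h : b * d = M) (x : Fin M × Fin M) :
    ((pt false h x).1 : ℕ) = (x.1 : ℕ) % d + d * ((x.2 : ℕ) / d) := by
  simp [pt, finProdFinEquiv, Fin.divNat, Fin.modNat, finCongr]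

lemma pt_false_snd {b d M : ℕ} (h : b * d = M) (x : Fin M × Fin M) :
    ((pt false h x).2 : ℕ) = (x.2 : ℕ) % d + d * ((x.1 : ℕ) / d) := by
  simp [pt, finProdFinEquiv, Fin.divNat, Fin.modNat, finCongr]

/-- value form of φ -/
def phi (d d' k : ℕ) : ℤ := (k : ℤ) - ((k % d : ℕ) : ℤ) - ((k % d' : ℕ) : ℤ)

lemma nat_key (i j d d' : ℕ) :
    (j % d + d * (i / d) = i % d' + d' * (j / d')
      ↔ phi d d' i = phi d d' j) := by
  unfold phi
  have h1 : d * (i / d) + i % d = i := Nat.div_add_mod i d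
  have h2 : d * (j / d) + j % d = j := Nat.div_add_mod j d
  have h3 : d' * (i / d') + i % d' = i := Nat.div_add_mod i d'
  have h4 : d' * (j / d') + j % d' = j := Nat.div_add_mod j d'
  generalize d * (i / d) = Q1 at *
  generalize d * (j / d) = Q2 at *
  generalize d' * (i / d') = Q3 at *
  generalize d' * (j / d') = Q4 at *
  generalize i % d = r1 at *
  generalize j % d = r2 at *
  generalize i % d' = r3 at *
  generalize j % d' = r4 at *
  omega

lemma pt_eq_iff {b d b' d' M : ℕ} (h : b * d = M) (h' : b' * d' = M)
    (θ θ' : Bool) (hθ : θ ≠ θ') (x : Fin M × Fin M) :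
    pt θ h x = pt θ' h' x ↔ phi d d' x.1 = phi d d' x.2 := by
  have symm_phi : ∀ k, phi d d' k = phi d' d k := by
    intro k; unfold phi; ring
  rcases θ with _ | _ <;> rcases θ' with _ | _ <;> simp at hθ <;>
    rw [Prod.ext_iff, Fin.ext_iff, Fin.ext_iff]
  · -- θ = false, θ' = true
    rw [pt_false_fst, pt_false_snd, pt_true_fst, pt_true_snd]
    constructor
    · rintro ⟨h1, _⟩
      rw [symm_phi x.1, symm_phi x.2]
      exact (nat_key _ _ _ _).mp h1.symm
    · intro hp
      rw [symm_phi x.1, symm_phi x.2] at hp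
      have e1 := (nat_key (x.2 : ℕ) (x.1 : ℕ) d' d).mpr ?_
      · have e2 := (nat_key (x.1 : ℕ) (x.2 : ℕ) d' d).mpr hp
        exact ⟨e2.symm, e1.symm⟩
      · unfold phi at hp ⊢; omega
  · -- θ = true, θ' = false
    rw [pt_true_fst, pt_true_snd, pt_false_fst, pt_false_snd]
    constructor
    · rintro ⟨h1, _⟩
      exact (nat_key _ _ _ _).mp h1
    · intro hp
      refine ⟨(nat_key _ _ _ _).mpr hp, (nat_key _ _ _ _).mpr ?_⟩
      unfold phi at hp ⊢; omega

lemma phi_symm (d d' k : ℕ) : phi d d' k = phi d' d k := by unfold phi; ring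

lemma lower {b d d' M : ℕ} (hd : 0 < d) (hd' : 0 < d') (h : b * d = M) :
    M ^ 2 ≤ ((Finset.univ.filter fun x : Fin M × Fin M =>
      phi d d' x.1 = phi d d' x.2).card) * (b * d') := by
  classical
  set S := (Finset.univ.filter fun x : Fin M × Fin M =>
      phi d d' x.1 = phi d d' x.2) with hS
  set t := Finset.image (fun k : Fin M => phi d d' k) Finset.univ with ht
  -- card t ≤ b * d'
  have htcard : t.card ≤ b * d' := by
    have himg : t = Finset.image (fun p : ℕ × ℕ => (d : ℤ) * p.1 - p.2)
        (Finset.image (fun k : Fin M => ((k : ℕ) / d, (k : ℕ) % d')) Finset.univ) := by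
      rw [ht, Finset.image_image]
      apply Finset.image_congr
      intro k _
      simp only [Function.comp]
      unfold phi
      have h1 : d * ((k : ℕ) / d) + (k : ℕ) % d = (k : ℕ) := Nat.div_add_mod _ d
      push_cast
      push_cast at h1
      linarith
    rw [himg]
    refine (Finset.card_image_le).trans ?_
    refine (Finset.card_le_card (t := Finset.range b ×ˢ Finset.range d') ?_).trans ?_
    · intro p hp
      simp only [Finset.mem_image, Finset.mem_univ, true_and] at hp
      obtain ⟨k, hk⟩ := hp
      have hk1 : (k : ℕ) < M := k.2
      subst hk
      simp only [Finset.mem_product, Finset.mem_range]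
      constructor
      · rw [Nat.div_lt_iff_lt_mul hd]; omega
      · exact Nat.mod_lt _ hd'
    · simp [Finset.card_product]
  -- sum of fiber cards = M
  have hsum : ∑ c ∈ t, ((Finset.univ.filter fun k : Fin M => phi d d' k = c).card) = M := by
    have := Finset.card_eq_sum_card_image (fun k : Fin M => phi d d' k) Finset.univ
    simp only [Finset.card_univ, Fintype.card_fin] at this
    rw [← ht] at this
    exact this.symm
  -- S.card = sum of squares
  have hScard : S.card = ∑ c ∈ t,
      ((Finset.univ.filter fun k : Fin M => phi d d' k = c).card) ^ 2 := by
    rw [Finset.card_eq_sum_card_fiberwise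
      (f := fun x : Fin M × Fin M => phi d d' x.1) (t := t)
      (by intro x hx; exact Finset.mem_image_of_mem _ (Finset.mem_univ x.1))]
    refine Finset.sum_congr rfl ?_
    intro c _
    have : S.filter (fun x => phi d d' x.1 = c) =
        (Finset.univ.filter fun k : Fin M => phi d d' k = c) ×ˢ
        (Finset.univ.filter fun k : Fin M => phi d d' k = c) := by
      ext x
      simp only [hS, Finset.mem_filter, Finset.mem_product, Finset.mem_univ, true_and]
      constructor
      · rintro ⟨h1, h2⟩; exact ⟨h2, h2 ▸ h1.symm ▸ h1 ▸ rfl⟩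
      · rintro ⟨h1, h2⟩; exact ⟨h1.trans h2.symm, h1⟩
    rw [this, Finset.card_product, sq]
  -- Cauchy-Schwarz over ℤ
  have cs := sq_sum_le_card_mul_sum_sq
    (s := t) (f := fun c => ((Finset.univ.filter fun k : Fin M => phi d d' k = c).card : ℤ))
  have h1 : ((M : ℤ)) ^ 2 ≤ (t.card : ℤ) * (S.card : ℤ) := by
    calc ((M : ℤ)) ^ 2
        = (∑ c ∈ t, ((Finset.univ.filter fun k : Fin M => phi d d' k = c).card : ℤ)) ^ 2 := by
          have hc : ((M : ℤ)) = ∑ c ∈ t,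
              ((Finset.univ.filter fun k : Fin M => phi d d' k = c).card : ℤ) := by
            exact_mod_cast hsum.symm
          rw [hc]
      _ ≤ (t.card : ℤ) * ∑ c ∈ t,
          ((Finset.univ.filter fun k : Fin M => phi d d' k = c).card : ℤ) ^ 2 := cs
      _ = (t.card : ℤ) * (S.card : ℤ) := by rw [hScard]; push_cast; ring
  have h2 : (t.card : ℤ) * (S.card : ℤ) ≤ (S.card : ℤ) * (b * d' : ℕ) := by
    rw [mul_comm]
    apply mul_le_mul_of_nonneg_left _ (by positivity)
    exact_mod_cast htcard
  exact_mod_cast h1.trans h2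

lemma fiber_bound {d d' M : ℕ} (hd : 0 < d) (hd' : 0 < d') (j : Fin M) :
    (Finset.univ.filter fun i : Fin M => phi d d' i = phi d d' j).card ≤
      (2 * (d' / d) + 1) * (2 * (d / d') + 1) := by
  classical
  set A : ℕ := d' / d with hA
  set B : ℕ := d / d' with hB
  have hAd : A * d ≤ d' := Nat.div_mul_le_self _ _
  have hAd2 : d' < A * d + d := Nat.lt_div_mul_add hd
  have hBd : B * d' ≤ d := Nat.div_mul_le_self _ _
  have hBd2 : d < B * d' + d' := Nat.lt_div_mul_add hd'
  set T : Finset (ℤ × ℤ) :=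
    (Finset.Icc (((j : ℕ) / d : ℤ) - A) (((j : ℕ) / d : ℤ) + A)) ×ˢ
    (Finset.image (fun t : ℤ => (((j : ℕ) % d : ℕ) : ℤ) + d' * t)
      (Finset.Icc (-(B : ℤ)) (B : ℤ))) with hT
  have hcard : T.card ≤ (2 * A + 1) * (2 * B + 1) := by
    rw [hT, Finset.card_product]
    refine Nat.mul_le_mul ?_ ?_
    · rw [Int.card_Icc]
      omega
    · refine Finset.card_image_le.trans ?_
      rw [Int.card_Icc]
      omega
  refine (Finset.card_le_card_of_injOn
    (s := Finset.univ.filter fun i : Fin M => phi d d' i = phi d d' j) (t := T)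
    (fun i => ((((i : ℕ) / d : ℕ) : ℤ), (((i : ℕ) % d : ℕ) : ℤ))) ?_ ?_).trans hcard
  · -- membership
    intro i hi
    rw [Finset.mem_coe] at hi ⊢
    simp only [Finset.mem_filter, Finset.mem_univ, true_and] at hi
    unfold phi at hi
    have hi1 : d * ((i : ℕ) / d) + (i : ℕ) % d = (i : ℕ) := Nat.div_add_mod _ d
    have hi2 : d' * ((i : ℕ) / d') + (i : ℕ) % d' = (i : ℕ) := Nat.div_add_mod _ d'
    have hj1 : d * ((j : ℕ) / d) + (j : ℕ) % d = (j : ℕ) := Nat.div_add_mod _ d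
    have hj2 : d' * ((j : ℕ) / d') + (j : ℕ) % d' = (j : ℕ) := Nat.div_add_mod _ d'
    have him : (i : ℕ) % d' < d' := Nat.mod_lt _ hd'
    have hjm : (j : ℕ) % d' < d' := Nat.mod_lt _ hd'
    have himd : (i : ℕ) % d < d := Nat.mod_lt _ hd
    have hjmd : (j : ℕ) % d < d := Nat.mod_lt _ hd
    rw [hT, Finset.mem_product]
    constructor
    · -- first coordinate in Icc
      rw [Finset.mem_Icc]
      -- d * (qi - qj) = i%d' - j%d'
      have key : (d : ℤ) * (((i : ℕ) / d : ℕ) - ((j : ℕ) / d : ℕ)) =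
          (((i : ℕ) % d' : ℕ) : ℤ) - (((j : ℕ) % d' : ℕ) : ℤ) := by
        have e1 : (d : ℤ) * (((i : ℕ) / d : ℕ) : ℤ) + (((i : ℕ) % d : ℕ) : ℤ) = (i : ℕ) := by
          exact_mod_cast hi1
        have e2 : (d : ℤ) * (((j : ℕ) / d : ℕ) : ℤ) + (((j : ℕ) % d : ℕ) : ℤ) = (j : ℕ) := by
          exact_mod_cast hj1
        rw [mul_sub]
        linarith [hi]
      constructor
      · by_contra hcon
        push_neg at hcon
        have h1 : (((j : ℕ) / d : ℕ) : ℤ) - (((i : ℕ) / d : ℕ) : ℤ) ≥ A + 1 := by omega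
        have h2 : (d : ℤ) * ((((j : ℕ) / d : ℕ) : ℤ) - (((i : ℕ) / d : ℕ) : ℤ)) ≥ d * (A + 1) := by
          apply mul_le_mul_of_nonneg_left h1 (by positivity)
        have h3 : (d : ℤ) * (A + 1) ≥ d' := by
          have hc : (d' : ℤ) < A * d + d := by exact_mod_cast hAd2
          linarith
        have h4 : (d : ℤ) * ((((i : ℕ) / d : ℕ) : ℤ) - (((j : ℕ) / d : ℕ) : ℤ)) =
            (((i : ℕ) % d' : ℕ) : ℤ) - (((j : ℕ) % d' : ℕ) : ℤ) := key
        have h5 : (((i : ℕ) % d' : ℕ) : ℤ) - (((j : ℕ) % d' : ℕ) : ℤ) ≥ -((d' : ℤ) - 1) := by omega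
        linarith [h2, h3, h4, h5]
      · by_contra hcon
        push_neg at hcon
        have h1 : (((i : ℕ) / d : ℕ) : ℤ) - (((j : ℕ) / d : ℕ) : ℤ) ≥ A + 1 := by omega
        have h2 : (d : ℤ) * ((((i : ℕ) / d : ℕ) : ℤ) - (((j : ℕ) / d : ℕ) : ℤ)) ≥ d * (A + 1) := by
          apply mul_le_mul_of_nonneg_left h1 (by positivity)
        have h3 : (d : ℤ) * (A + 1) ≥ d' := by
          have hc : (d' : ℤ) < A * d + d := by exact_mod_cast hAd2
          linarith
        have h5 : (((i : ℕ) % d' : ℕ) : ℤ) - (((j : ℕ) % d' : ℕ) : ℤ) ≤ (d' : ℤ) - 1 := by omega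
        linarith [h2, h3, key, h5]
    · -- second coordinate in image
      simp only [Finset.mem_image, Finset.mem_Icc]
      refine ⟨(((i : ℕ) / d' : ℕ) : ℤ) - (((j : ℕ) / d' : ℕ) : ℤ), ⟨?_, ?_⟩, ?_⟩
      · -- -B ≤ t
        by_contra hcon
        push_neg at hcon
        have h1 : (((j : ℕ) / d' : ℕ) : ℤ) - (((i : ℕ) / d' : ℕ) : ℤ) ≥ B + 1 := by omega
        have h2 : (d' : ℤ) * ((((j : ℕ) / d' : ℕ) : ℤ) - (((i : ℕ) / d' : ℕ) : ℤ)) ≥ d' * (B + 1) := by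
          apply mul_le_mul_of_nonneg_left h1 (by positivity)
        have h3 : (d' : ℤ) * (B + 1) ≥ d := by
          have hc : (d : ℤ) < B * d' + d' := by exact_mod_cast hBd2
          linarith
        have key2 : (d' : ℤ) * ((((i : ℕ) / d' : ℕ) : ℤ) - (((j : ℕ) / d' : ℕ) : ℤ)) =
            (((i : ℕ) % d : ℕ) : ℤ) - (((j : ℕ) % d : ℕ) : ℤ) := by
          have e1 : (d' : ℤ) * (((i : ℕ) / d' : ℕ) : ℤ) + (((i : ℕ) % d' : ℕ) : ℤ) = (i : ℕ) := by
            exact_mod_cast hi2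
          have e2 : (d' : ℤ) * (((j : ℕ) / d' : ℕ) : ℤ) + (((j : ℕ) % d' : ℕ) : ℤ) = (j : ℕ) := by
            exact_mod_cast hj2
          rw [mul_sub]
          linarith [hi]
        have h5 : (((i : ℕ) % d : ℕ) : ℤ) - (((j : ℕ) % d : ℕ) : ℤ) ≥ -((d : ℤ) - 1) := by omega
        linarith [h2, h3, key2, h5]
      · -- t ≤ B
        by_contra hcon
        push_neg at hcon
        have h1 : (((i : ℕ) / d' : ℕ) : ℤ) - (((j : ℕ) / d' : ℕ) : ℤ) ≥ B + 1 := by omega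
        have h2 : (d' : ℤ) * ((((i : ℕ) / d' : ℕ) : ℤ) - (((j : ℕ) / d' : ℕ) : ℤ)) ≥ d' * (B + 1) := by
          apply mul_le_mul_of_nonneg_left h1 (by positivity)
        have h3 : (d' : ℤ) * (B + 1) ≥ d := by
          have hc : (d : ℤ) < B * d' + d' := by exact_mod_cast hBd2
          linarith
        have key2 : (d' : ℤ) * ((((i : ℕ) / d' : ℕ) : ℤ) - (((j : ℕ) / d' : ℕ) : ℤ)) =
            (((i : ℕ) % d : ℕ) : ℤ) - (((j : ℕ) % d : ℕ) : ℤ) := by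
          have e1 : (d' : ℤ) * (((i : ℕ) / d' : ℕ) : ℤ) + (((i : ℕ) % d' : ℕ) : ℤ) = (i : ℕ) := by
            exact_mod_cast hi2
          have e2 : (d' : ℤ) * (((j : ℕ) / d' : ℕ) : ℤ) + (((j : ℕ) % d' : ℕ) : ℤ) = (j : ℕ) := by
            exact_mod_cast hj2
          rw [mul_sub]
          linarith [hi]
        have h5 : (((i : ℕ) % d : ℕ) : ℤ) - (((j : ℕ) % d : ℕ) : ℤ) ≤ (d : ℤ) - 1 := by omega
        linarith [h2, h3, key2, h5]
      · -- value equation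
        have key2 : (d' : ℤ) * ((((i : ℕ) / d' : ℕ) : ℤ) - (((j : ℕ) / d' : ℕ) : ℤ)) =
            (((i : ℕ) % d : ℕ) : ℤ) - (((j : ℕ) % d : ℕ) : ℤ) := by
          have e1 : (d' : ℤ) * (((i : ℕ) / d' : ℕ) : ℤ) + (((i : ℕ) % d' : ℕ) : ℤ) = (i : ℕ) := by
            exact_mod_cast hi2
          have e2 : (d' : ℤ) * (((j : ℕ) / d' : ℕ) : ℤ) + (((j : ℕ) % d' : ℕ) : ℤ) = (j : ℕ) := by
            exact_mod_cast hj2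
          rw [mul_sub]
          linarith [hi]
        linarith [key2]
  · -- injectivity
    intro i _ i' _ hii
    simp only [Prod.mk.injEq] at hii
    have h1 : (i : ℕ) / d = (i' : ℕ) / d := by exact_mod_cast hii.1
    have h2 : (i : ℕ) % d = (i' : ℕ) % d := by exact_mod_cast hii.2
    have e1 := Nat.div_add_mod (i : ℕ) d
    have e2 := Nat.div_add_mod (i' : ℕ) d
    apply Fin.ext
    rw [h1, h2] at e1
    omega

lemma upper {b d b' d' M : ℕ} (hd : 0 < d) (hd' : 0 < d')
    (h : b * d = M) (h' : b' * d' = M) :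
    ((Finset.univ.filter fun x : Fin M × Fin M =>
      phi d d' x.1 = phi d d' x.2).card) ≤ 5 * M + 2 * (b * d') + 2 * (b' * d) := by
  classical
  set S := (Finset.univ.filter fun x : Fin M × Fin M =>
      phi d d' x.1 = phi d d' x.2) with hS
  set K : ℕ := (2 * (d' / d) + 1) * (2 * (d / d') + 1) with hK
  have step : S.card ≤ M * K := by
    have h1 : S.card = ∑ j : Fin M, (S.filter fun x => x.2 = j).card :=
      Finset.card_eq_sum_card_fiberwise (fun x _ => Finset.mem_univ x.2)
    have h2 : ∀ j : Fin M, (S.filter fun x => x.2 = j).card =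
        (Finset.univ.filter fun i : Fin M => phi d d' i = phi d d' j).card := by
      intro j
      refine Finset.card_bij' (fun x _ => x.1) (fun i _ => (i, j)) ?_ ?_ ?_ ?_
      all_goals intro a ha
      all_goals simp only [hS, Finset.mem_filter, Finset.mem_univ, true_and] at ha ⊢
      · exact ha.2 ▸ ha.1
      · exact ⟨ha, trivial⟩
      · exact Prod.ext rfl ha.2.symm
    calc S.card = ∑ j : Fin M, (Finset.univ.filter fun i : Fin M =>
            phi d d' i = phi d d' j).card := by
          rw [h1]; exact Finset.sum_congr rfl fun j _ => h2 j
      _ ≤ ∑ _j : Fin M, K := Finset.sum_le_sum fun j _ => fiber_bound hd hd' j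
      _ = M * K := by simp [mul_comm]
  have arith : M * K * (d * d') ≤ (5 * M + 2 * (b * d') + 2 * (b' * d)) * (d * d') := by
    have hKd : K * (d * d') ≤ (2 * d' + d) * (2 * d + d') := by
      have e1 : (2 * (d' / d) + 1) * d ≤ 2 * d' + d := by
        have := Nat.div_mul_le_self d' d
        calc (2 * (d' / d) + 1) * d = 2 * (d' / d * d) + d := by ring
          _ ≤ 2 * d' + d := by omega
      have e2 : (2 * (d / d') + 1) * d' ≤ 2 * d + d' := by
        have := Nat.div_mul_le_self d d'
        calc (2 * (d / d') + 1) * d' = 2 * (d / d' * d') + d' := by ring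
          _ ≤ 2 * d + d' := by omega
      calc K * (d * d') = ((2 * (d' / d) + 1) * d) * ((2 * (d / d') + 1) * d') := by
            rw [hK]; ring
        _ ≤ (2 * d' + d) * (2 * d + d') := Nat.mul_le_mul e1 e2
    have e : (M : ℤ) * ((2 * d' + d) * (2 * d + d')) =
        ((5 * M + 2 * (b * d') + 2 * (b' * d)) * (d * d') : ℕ) := by
      have hz : (b : ℤ) * d = M := by exact_mod_cast h
      have hz' : (b' : ℤ) * d' = M := by exact_mod_cast h'
      push_cast
      linear_combination (-2 * (d' : ℤ) ^ 2) * hz + (-2 * (d : ℤ) ^ 2) * hz'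
    have e' : M * ((2 * d' + d) * (2 * d + d')) =
        (5 * M + 2 * (b * d') + 2 * (b' * d)) * (d * d') := by exact_mod_cast e
    calc M * K * (d * d') = M * (K * (d * d')) := by ring
      _ ≤ M * ((2 * d' + d) * (2 * d + d')) := Nat.mul_le_mul_left _ hKd
      _ = _ := e'
  have hdd : 0 < d * d' := Nat.mul_pos hd hd'
  have := Nat.mul_le_mul_right (d * d') step
  exact Nat.le_of_mul_le_mul_right (this.trans arith) hdd

lemma nat_tendsto_of_inv (a : ℕ → ℕ) (ha : ∀ n, 0 < a n)
    (hf : Tendsto (fun n => ((a n : ℝ))⁻¹) atTop (nhds 0)) :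
    Tendsto a atTop atTop := by
  rw [tendsto_atTop]
  intro K
  have hε : (0 : ℝ) < ((K : ℝ) + 1)⁻¹ := by positivity
  have := hf (Iio_mem_nhds hε)
  rw [mem_map] at this
  filter_upwards [this] with n hn
  simp only [Set.mem_preimage, Set.mem_Iio] at hn
  have hpos : (0 : ℝ) < (a n : ℝ) := by exact_mod_cast ha n
  have : (K : ℝ) + 1 < a n := (inv_lt_inv₀ hpos (by positivity)).mp hn
  have : (K : ℝ) ≤ a n := by linarith
  exact_mod_cast this

lemma inv_tendsto_of_nat (a : ℕ → ℕ) (ha : Tendsto a atTop atTop) :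
    Tendsto (fun n => ((a n : ℝ))⁻¹) atTop (nhds 0) := by
  have h1 : Tendsto (fun n => ((a n : ℝ))) atTop atTop :=
    tendsto_natCast_atTop_atTop.comp ha
  exact h1.inv_tendsto_atTop

theorem stmt_8 (b d b' d' M : ℕ → ℕ)
    (hbm : Monotone b) (hdm : Monotone d) (hb'm : Monotone b') (hd'm : Monotone d')
    (hb : ∀ n, 0 < b n) (hd : ∀ n, 0 < d n) (hb' : ∀ n, 0 < b' n) (hd' : ∀ n, 0 < d' n)
    (hM : ∀ n, b n * d n = M n) (hM' : ∀ n, b' n * d' n = M n)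
    (hMtop : Tendsto M atTop atTop) (θ θ' : Bool) (hθ : θ ≠ θ') :
    Tendsto
      (fun n => ((Finset.univ.filter fun x : Fin (M n) × Fin (M n) =>
          pt θ (hM n) x = pt θ' (hM' n) x).card : ℝ) / (M n : ℝ) ^ 2)
      atTop (nhds 0)
    ↔ (Tendsto (fun n => b n * d' n) atTop atTop
      ∧ Tendsto (fun n => b' n * d n) atTop atTop) := by
  classical
  have hMpos : ∀ n, 0 < M n := fun n => (hM n) ▸ Nat.mul_pos (hb n) (hd n)
  set C : ℕ → ℕ := fun n => ((Finset.univ.filter fun x : Fin (M n) × Fin (M n) =>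
      phi (d n) (d' n) x.1 = phi (d n) (d' n) x.2).card) with hC
  have hfilter : ∀ n, ((Finset.univ.filter fun x : Fin (M n) × Fin (M n) =>
      pt θ (hM n) x = pt θ' (hM' n) x).card) = C n := by
    intro n
    congr 1
    ext x
    simp only [Finset.mem_filter, Finset.mem_univ, true_and]
    rw [pt_eq_iff (hM n) (hM' n) θ θ' hθ x]
  simp only [hfilter]
  have hlow1 : ∀ n, M n ^ 2 ≤ C n * (b n * d' n) := fun n =>
    lower (hd n) (hd' n) (hM n)
  have hlow2 : ∀ n, M n ^ 2 ≤ C n * (b' n * d n) := by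
    intro n
    have h := lower (hd' n) (hd n) (hM' n)
    have : (Finset.univ.filter fun x : Fin (M n) × Fin (M n) =>
        phi (d' n) (d n) x.1 = phi (d' n) (d n) x.2) =
        (Finset.univ.filter fun x : Fin (M n) × Fin (M n) =>
        phi (d n) (d' n) x.1 = phi (d n) (d' n) x.2) := by
      ext x
      simp only [Finset.mem_filter, phi_symm]
    rw [this] at h
    exact h
  have hup : ∀ n, C n ≤ 5 * M n + 2 * (b n * d' n) + 2 * (b' n * d n) := fun n =>
    upper (hd n) (hd' n) (hM n) (hM' n)
  have hMsq : ∀ n, (M n : ℝ) ^ 2 = (b n * d' n : ℕ) * ((b' n * d n : ℕ) : ℝ) := by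
    intro n
    have h1 := hM n
    have h2 := hM' n
    push_cast
    have hz : (b n : ℝ) * d n = M n := by exact_mod_cast h1
    have hz' : (b' n : ℝ) * d' n = M n := by exact_mod_cast h2
    nlinarith [hz, hz']
  constructor
  · -- limit 0 → both atTop
    intro hlim
    constructor
    · apply nat_tendsto_of_inv _ (fun n => Nat.mul_pos (hb n) (hd' n))
      apply squeeze_zero (fun n => by positivity) _ hlim
      intro n
      have hpos1 : (0 : ℝ) < ((b n * d' n : ℕ) : ℝ) := by
        exact_mod_cast Nat.mul_pos (hb n) (hd' n)
      have hMr : (0 : ℝ) < (M n : ℝ) := by exact_mod_cast hMpos n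
      rw [inv_eq_one_div, div_le_div_iff₀ hpos1 (by positivity), one_mul]
      calc (M n : ℝ) ^ 2 = ((M n ^ 2 : ℕ) : ℝ) := by push_cast; ring
        _ ≤ ((C n * (b n * d' n) : ℕ) : ℝ) := by exact_mod_cast hlow1 n
        _ = (C n : ℝ) * ((b n * d' n : ℕ) : ℝ) := by push_cast; ring
    · apply nat_tendsto_of_inv _ (fun n => Nat.mul_pos (hb' n) (hd n))
      apply squeeze_zero (fun n => by positivity) _ hlim
      intro n
      have hpos1 : (0 : ℝ) < ((b' n * d n : ℕ) : ℝ) := by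
        exact_mod_cast Nat.mul_pos (hb' n) (hd n)
      have hMr : (0 : ℝ) < (M n : ℝ) := by exact_mod_cast hMpos n
      rw [inv_eq_one_div, div_le_div_iff₀ hpos1 (by positivity), one_mul]
      calc (M n : ℝ) ^ 2 = ((M n ^ 2 : ℕ) : ℝ) := by push_cast; ring
        _ ≤ ((C n * (b' n * d n) : ℕ) : ℝ) := by exact_mod_cast hlow2 n
        _ = (C n : ℝ) * ((b' n * d n : ℕ) : ℝ) := by push_cast; ring
  · -- both atTop → limit 0
    rintro ⟨h1, h2⟩
    have hbound : ∀ n, (C n : ℝ) / (M n : ℝ) ^ 2 ≤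
        5 * ((M n : ℝ))⁻¹ + 2 * (((b' n * d n : ℕ) : ℝ))⁻¹ + 2 * (((b n * d' n : ℕ) : ℝ))⁻¹ := by
      intro n
      have hMr : (0 : ℝ) < M n := by exact_mod_cast hMpos n
      have hbd' : (0 : ℝ) < ((b n * d' n : ℕ) : ℝ) := by
        exact_mod_cast Nat.mul_pos (hb n) (hd' n)
      have hb'd : (0 : ℝ) < ((b' n * d n : ℕ) : ℝ) := by
        exact_mod_cast Nat.mul_pos (hb' n) (hd n)
      have hCle : (C n : ℝ) ≤ 5 * M n + 2 * ((b n * d' n : ℕ) : ℝ) + 2 * ((b' n * d n : ℕ) : ℝ) := by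
        exact_mod_cast hup n
      have hb0 : (b n : ℝ) ≠ 0 := Nat.cast_ne_zero.mpr (hb n).ne'
      have hd0 : (d n : ℝ) ≠ 0 := Nat.cast_ne_zero.mpr (hd n).ne'
      have hb'0 : (b' n : ℝ) ≠ 0 := Nat.cast_ne_zero.mpr (hb' n).ne'
      have hd'0 : (d' n : ℝ) ≠ 0 := Nat.cast_ne_zero.mpr (hd' n).ne'
      have hM0 : (M n : ℝ) ≠ 0 := Nat.cast_ne_zero.mpr (hMpos n).ne'
      rw [div_le_iff₀ (by positivity)]
      have e1 : ((M n : ℝ))⁻¹ * (M n : ℝ) ^ 2 = M n := by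
        field_simp
      have e2 : (((b' n * d n : ℕ) : ℝ))⁻¹ * (M n : ℝ) ^ 2 = ((b n * d' n : ℕ) : ℝ) := by
        rw [hMsq n]
        field_simp
      have e3 : (((b n * d' n : ℕ) : ℝ))⁻¹ * (M n : ℝ) ^ 2 = ((b' n * d n : ℕ) : ℝ) := by
        rw [hMsq n]
        field_simp
      calc (C n : ℝ) ≤ 5 * M n + 2 * ((b n * d' n : ℕ) : ℝ) + 2 * ((b' n * d n : ℕ) : ℝ) := hCle
        _ = (5 * ((M n : ℝ))⁻¹ + 2 * (((b' n * d n : ℕ) : ℝ))⁻¹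
            + 2 * (((b n * d' n : ℕ) : ℝ))⁻¹) * (M n : ℝ) ^ 2 := by
          rw [add_mul, add_mul, mul_assoc, mul_assoc, mul_assoc, e1, e2, e3]
    have hz : Tendsto (fun n => 5 * ((M n : ℝ))⁻¹ + 2 * (((b' n * d n : ℕ) : ℝ))⁻¹
        + 2 * (((b n * d' n : ℕ) : ℝ))⁻¹) atTop (nhds 0) := by
      have t1 := inv_tendsto_of_nat M hMtop
      have t2 := inv_tendsto_of_nat _ h2
      have t3 := inv_tendsto_of_nat _ h1
      have := ((t1.const_mul 5).add (t2.const_mul 2)).add (t3.const_mul 2)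
      simpa using this
    apply squeeze_zero (fun n => by positivity) hbound hz
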